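/- Let $G$ be a bridgeless graph of diameter $2$. Then either $G$ is $2$-connected, or $G$ has exactly one cut vertex $v$; in the latter case $v$ is adjacent to every other vertex of $G$ (so $G$ has radius $1$ with center $v$). -/

import Mathlib

open SimpleGraph

/-- A total coloring (edge colors `cE`, vertex colors `cV`) makes `G`
total-rainbow connected if any two distinct vertices are joined by a path
whose edges and internal vertices receive pairwise distinct colors. -/
def IsTRCColoring {V : Type*} (G : SimpleGraph V) {k : ℕ}
    (cE : Sym2 V → Fin k) (cV : V → Fin k) : Prop :=
  ∀ u v : V, u ≠ v → ∃ p : G.Walk u v, p.IsPath ∧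
    (p.edges.map cE ++ p.support.tail.dropLast.map cV).Nodup

/-- The total-rainbow connection number of `G`. -/
noncomputable def trc {V : Type*} (G : SimpleGraph V) : ℕ :=
  sInf {k | ∃ (cE : Sym2 V → Fin k) (cV : V → Fin k), IsTRCColoring G cE cV}

/-- `v` is a cut vertex of `G`: removing it disconnects the graph. -/
def IsCutVertex {V : Type*} (G : SimpleGraph V) (v : V) : Prop :=
  G.Connected ∧ ¬ (G.induce ({v}ᶜ : Set V)).Connected

/-- `G` is 2-connected: it has at least 3 vertices and removing any single
vertex leaves it connected. -/
def IsTwoConnected {V : Type*} [Fintype V] (G : SimpleGraph V) : Prop :=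
  3 ≤ Fintype.card V ∧ ∀ v : V, (G.induce ({v}ᶜ : Set V)).Connected

lemma reach_induce {V : Type*} (G : SimpleGraph V) (s : Set V) :
    ∀ {a b : V} (p : G.Walk a b), (∀ x ∈ p.support, x ∈ s) →
      ∀ (ha : a ∈ s) (hb : b ∈ s), (G.induce s).Reachable ⟨a, ha⟩ ⟨b, hb⟩ := by
  intro a b p
  induction p with
  | nil => intro _ ha hb; rfl
  | @cons u m b h q ih =>
    intro hsup ha hb
    have hm : m ∈ s := hsup _ (by simp [SimpleGraph.Walk.support_cons])
    exact ((show (G.induce s).Adj ⟨u, ha⟩ ⟨m, hm⟩ from h).reachable).trans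
      (ih (fun x hx => hsup x (by simp [SimpleGraph.Walk.support_cons, hx])) hm hb)

lemma cut_adj {V : Type*} [Fintype V] (G : SimpleGraph V) (hconn : G.Connected)
    (hdiam : G.diam = 2) (hcard : 3 ≤ Fintype.card V)
    {v : V} (hv : ¬ (G.induce ({v}ᶜ : Set V)).Connected) :
    ∀ w : V, w ≠ v → G.Adj v w := by
  have hne : Nonempty ({v}ᶜ : Set V) := by
    by_contra h
    have hall : ∀ x : V, x = v := by
      intro x; by_contra hx
      exact h ⟨⟨x, hx⟩⟩
    have : Fintype.card V ≤ 1 :=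
      Fintype.card_le_one_iff.mpr (fun a b => (hall a).trans (hall b).symm)
    omega
  have hpre : ¬ ∀ a b : ({v}ᶜ : Set V), (G.induce ({v}ᶜ : Set V)).Reachable a b :=
    fun h => hv ((SimpleGraph.connected_iff _).mpr ⟨h, hne⟩)
  push_neg at hpre
  obtain ⟨a, b, hab⟩ := hpre
  have hed : G.ediam ≠ ⊤ := G.ediam_ne_top_of_diam_ne_zero (by omega)
  have key : ∀ (w : V) (hw : w ≠ v) (z : ({v}ᶜ : Set V)),
      ¬ (G.induce ({v}ᶜ : Set V)).Reachable ⟨w, hw⟩ z → G.Adj v w := by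
    intro w hw z hreach
    obtain ⟨z, hz⟩ := z
    have hd : G.dist w z ≤ 2 := hdiam ▸ G.dist_le_diam hed
    obtain ⟨p, hp⟩ := (hconn w z).exists_walk_length_eq_dist
    cases p with
    | nil =>
      exact (hreach (SimpleGraph.Reachable.refl _)).elim
    | @cons _ m _ h q =>
      cases q with
      | nil =>
        exact absurd (reach_induce G _ (SimpleGraph.Walk.cons h SimpleGraph.Walk.nil)
          (by intro x hx; simp [SimpleGraph.Walk.support_cons] at hx
              rcases hx with h1 | h1 <;> simp [h1, hw, hz]) hw hz) hreach
      | @cons _ m2 _ h2 q2 =>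
        have hlen : q2.length = 0 := by
          simp [SimpleGraph.Walk.length_cons] at hp; omega
        have hm2 : m2 = z := SimpleGraph.Walk.eq_of_length_eq_zero hlen
        subst hm2
        by_cases hmv : m = v
        · subst hmv; exact h.symm
        · have : q2 = SimpleGraph.Walk.nil := SimpleGraph.Walk.nil_iff_eq_nil.mp (SimpleGraph.Walk.length_eq_zero_iff.mp hlen)
          subst this
          refine absurd (reach_induce G _ (SimpleGraph.Walk.cons h (SimpleGraph.Walk.cons h2 SimpleGraph.Walk.nil))
            (by intro x hx; simp [SimpleGraph.Walk.support_cons] at hx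
                rcases hx with h1 | h1 | h1 <;> simp [h1, hw, hz, hmv]) hw hz) hreach
  intro w hw
  by_cases hwa : (G.induce ({v}ᶜ : Set V)).Reachable ⟨w, hw⟩ a
  · by_cases hwb : (G.induce ({v}ᶜ : Set V)).Reachable ⟨w, hw⟩ b
    · exact absurd (hwa.symm.trans hwb) hab
    · exact key w hw b hwb
  · exact key w hw a hwa

lemma card3 {V : Type*} [Fintype V] (G : SimpleGraph V) (hconn : G.Connected)
    (hdiam : G.diam = 2) : 3 ≤ Fintype.card V := by
  have : Nontrivial V := G.nontrivial_of_diam_ne_zero (by omega)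
  obtain ⟨u, v, huv⟩ := G.exists_dist_eq_diam
  rw [hdiam] at huv
  obtain ⟨p, hp⟩ := (hconn u v).exists_walk_length_eq_dist
  rw [huv] at hp
  cases p with
  | nil => simp at hp
  | @cons _ m _ h q =>
    cases q with
    | nil => simp at hp
    | @cons _ m2 _ h2 q2 =>
      have huv' : u ≠ v := by
        intro he; subst he; rw [SimpleGraph.dist_self] at huv; omega
      exact Fintype.two_lt_card_iff.mpr ⟨u, m, v, h.ne, huv', by
        have : q2.length = 0 := by simp only [SimpleGraph.Walk.length_cons] at hp; omega
        have hm2 : m2 = v := SimpleGraph.Walk.eq_of_length_eq_zero this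
        subst hm2
        exact h2.ne⟩

theorem stmt_15 {V : Type*} [Fintype V] (G : SimpleGraph V)
    (hconn : G.Connected) (hbridgeless : ∀ e : Sym2 V, ¬ G.IsBridge e)
    (hdiam : G.diam = 2) :
    IsTwoConnected G ∨
      ∃ v : V, IsCutVertex G v ∧ (∀ w : V, IsCutVertex G w → w = v) ∧
        ∀ w : V, w ≠ v → G.Adj v w := by
  have hcard := card3 G hconn hdiam
  by_cases h2c : ∀ v : V, (G.induce ({v}ᶜ : Set V)).Connected
  · exact Or.inl ⟨hcard, h2c⟩
  · push_neg at h2c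
    obtain ⟨v, hv⟩ := h2c
    have hadj := cut_adj G hconn hdiam hcard hv
    refine Or.inr ⟨v, ⟨hconn, hv⟩, ?_, hadj⟩
    intro w hw
    by_contra hwv
    have hadjw := cut_adj G hconn hdiam hcard hw.2
    -- show (G.induce {v}ᶜ) is connected, contradiction with hv
    apply hv
    have hwmem : w ∈ ({v}ᶜ : Set V) := hwv
    rw [SimpleGraph.connected_iff]
    refine ⟨?_, ⟨⟨w, hwmem⟩⟩⟩
    have hstep : ∀ x : ({v}ᶜ : Set V), (G.induce ({v}ᶜ : Set V)).Reachable ⟨w, hwmem⟩ x := by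
      intro ⟨x, hx⟩
      by_cases hxw : x = w
      · subst hxw; rfl
      · exact SimpleGraph.Adj.reachable
          (show (G.induce ({v}ᶜ : Set V)).Adj ⟨w, hwmem⟩ ⟨x, hx⟩ from hadjw x hxw)
    intro a b
    exact (hstep a).symm.trans (hstep b)
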